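/- Let G be a finite simple graph with vertex enumeration x_1, …, x_n, let λ > 0 and C > 0 be reals, and define T recursively by T(x_i) := (2/(5λ)) · Σ_{j < i, x_j ~ x_i} T(x_j) + 10·C·deg(x_i)/λ. For k ≥ 2 and indices i < j, let z_{k,i,j} denote the number of k-node directed paths i = p_1 < p_2 < ⋯ < p_k (with x_{p_l} adjacent to x_{p_{l+1}} for all 1 ≤ l < k) such that p_2, …, p_k ≥ j, and set z_{1,i,j} := 1; let z_{k,i} := z_{k,i,i+1} for k ≥ 2 and z_{1,i} := 1. Then for every η ∈ {0, 1, …, n−1}: Σ_{i=1}^{n} T(x_i) = Σ_{i=1}^{η} T(x_i) · ( Σ_{k=1}^{n} z_{k,i,η+1} · (2/(5λ))^{k−1} ) + Σ_{i=η+1}^{n} (10·C·deg(x_i)/λ) · ( Σ_{k=1}^{n} z_{k,i} · (2/(5λ))^{k−1} ). -/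

import Mathlib

open Classical in
noncomputable def pathCountFrom {V : Type*} [Fintype V] (G : SimpleGraph V) {n : ℕ}
    (x : Fin n ≃ V) (k : ℕ) (i : Fin n) (j : ℕ) : ℕ :=
  (Finset.univ.filter (fun p : Fin (k + 1) → Fin n =>
    StrictMono p ∧ p 0 = i ∧ (∀ l : Fin k, j ≤ (p l.succ : ℕ)) ∧
      ∀ l : Fin k, G.Adj (x (p l.castSucc)) (x (p l.succ)))).card

section
variable {V : Type*} [Fintype V] (G : SimpleGraph V) {n : ℕ} (x : Fin n ≃ V)

lemma smono_add_le {m : ℕ} (p : Fin (m+1) → Fin n) (hp : StrictMono p) (l : Fin (m+1)) :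
    (p 0 : ℕ) + (l : ℕ) ≤ (p l : ℕ) := by
  induction l using Fin.induction with
  | zero => simp
  | succ i ih =>
      have h := hp (Fin.castSucc_lt_succ : i.castSucc < i.succ)
      have h2 : (p i.castSucc : ℕ) < (p i.succ : ℕ) := h
      simp only [Fin.coe_castSucc, Fin.val_succ] at *
      omega

lemma pc_zero (i : Fin n) (j : ℕ) : pathCountFrom G x 0 i j = 1 := by
  classical
  unfold pathCountFrom
  rw [Finset.card_eq_one]
  refine ⟨fun _ => i, ?_⟩
  ext p
  simp only [Finset.mem_filter, Finset.mem_univ, true_and, Finset.mem_singleton]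
  constructor
  · rintro ⟨-, h0, -, -⟩
    funext l
    have : l = 0 := by omega
    rw [this, h0]
  · rintro rfl
    exact ⟨fun a b h => absurd h (by omega), rfl, fun l => l.elim0, fun l => l.elim0⟩

lemma pc_big (k : ℕ) (i : Fin n) (j : ℕ) (hk : n ≤ (i : ℕ) + k) :
    pathCountFrom G x k i j = 0 := by
  classical
  unfold pathCountFrom
  rw [Finset.card_eq_zero, Finset.filter_eq_empty_iff]
  rintro p - ⟨hs, h0, -, -⟩
  have h1 := smono_add_le p hs (Fin.last k)
  have h2 := (p (Fin.last k)).isLt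
  rw [h0] at h1
  simp [Fin.val_last] at h1
  omega

lemma pc_top (k : ℕ) (hk : k ≠ 0) (i : Fin n) : pathCountFrom G x k i n = 0 := by
  classical
  obtain ⟨k', rfl⟩ := Nat.exists_eq_succ_of_ne_zero hk
  unfold pathCountFrom
  rw [Finset.card_eq_zero, Finset.filter_eq_empty_iff]
  rintro p - ⟨-, -, hge, -⟩
  exact absurd (hge 0) (by have := (p (0 : Fin (k'+1)).succ).isLt; omega)


lemma one_eq_zero_succ (k : ℕ) : (1 : Fin (k+2)) = (0 : Fin (k+1)).succ := by
  ext; simp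

lemma pc_split [DecidableRel G.Adj] (k : ℕ) (i e : Fin n) (hie : i < e) :
    pathCountFrom G x (k+1) i (e : ℕ) = pathCountFrom G x (k+1) i ((e : ℕ)+1) +
      if G.Adj (x i) (x e) then pathCountFrom G x k e ((e : ℕ)+1) else 0 := by
  classical
  unfold pathCountFrom
  rw [← Finset.card_filter_add_card_filter_not
    (fun p : Fin (k+1+1) → Fin n => (e : ℕ) + 1 ≤ (p 1 : ℕ))]
  congr 1
  · -- p 1 ≥ e+1 part ↔ threshold e+1
    rw [Finset.filter_filter]
    refine Finset.card_nbij id ?_ Function.injective_id.injOn ?_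
    · intro p hp
      simp only [Finset.mem_coe, Finset.mem_filter, Finset.mem_univ, true_and, id] at hp ⊢
      obtain ⟨⟨hs, h0, hge, hadj⟩, h1⟩ := hp
      refine ⟨hs, h0, ?_, hadj⟩
      intro l
      have h2 : p 1 ≤ p l.succ := hs.monotone (by
        rw [Fin.le_def, Fin.val_one, Fin.val_succ]; omega)
      rw [Fin.le_def] at h2
      omega
    · intro p hp
      simp only [Finset.mem_coe, Finset.mem_filter, Finset.mem_univ, true_and] at hp
      obtain ⟨hs, h0, hge, hadj⟩ := hp
      refine ⟨p, ?_, rfl⟩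
      simp only [Finset.mem_coe, Finset.mem_filter, Finset.mem_univ, true_and]
      refine ⟨⟨hs, h0, fun l => le_trans (by omega) (hge l), hadj⟩, ?_⟩
      have := hge 0
      rwa [← one_eq_zero_succ k] at this
  · -- p 1 = e part
    by_cases hadje : G.Adj (x i) (x e)
    · rw [if_pos hadje]
      refine Finset.card_bij' (fun p _ => fun m : Fin (k+1) => p m.succ)
        (fun p' _ => Fin.cases i p') ?_ ?_ ?_ ?_
      · -- forward membership
        intro p hp
        simp only [Finset.mem_filter, Finset.mem_univ, true_and, not_le] at hp ⊢
        obtain ⟨⟨hs, h0, hge, hadj⟩, h1⟩ := hp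
        have hp1 : p 1 = e := by
          have := hge 0
          rw [← one_eq_zero_succ k] at this
          ext; omega
        refine ⟨hs.comp Fin.strictMono_succ, by rw [one_eq_zero_succ k] at hp1; exact hp1,
          ?_, ?_⟩
        · intro l
          have h2 : p 1 < p l.succ.succ := hs (by rw [Fin.lt_def]; simp)
          rw [Fin.lt_def, hp1] at h2
          simpa using h2
        · intro l
          rw [Fin.succ_castSucc]
          exact hadj l.succ
      · -- backward membership
        intro p' hp'
        simp only [Finset.mem_filter, Finset.mem_univ, true_and, not_le] at hp' ⊢
        obtain ⟨hs, h0, hge, hadj⟩ := hp'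
        have hc1 : Fin.cases (motive := fun _ => Fin n) i p' 1 = e := by
          rw [one_eq_zero_succ k, Fin.cases_succ, h0]
        refine ⟨⟨?_, by simp, ?_, ?_⟩, by rw [hc1]; omega⟩
        · rw [Fin.strictMono_iff_lt_succ]
          intro m
          induction m using Fin.cases with
          | zero => simpa [← one_eq_zero_succ k, hc1] using hie
          | succ m' =>
              rw [← Fin.succ_castSucc, Fin.cases_succ, Fin.cases_succ]
              exact hs (Fin.castSucc_lt_succ : m'.castSucc < m'.succ)
        · intro l
          rw [Fin.cases_succ]
          have h2 : p' 0 ≤ p' l := hs.monotone (Fin.zero_le l)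
          rw [Fin.le_def, h0] at h2
          omega
        · intro l
          induction l using Fin.cases with
          | zero => simpa [← one_eq_zero_succ k, Fin.castSucc_zero, hc1] using hadje
          | succ m' =>
              rw [← Fin.succ_castSucc, Fin.cases_succ, Fin.cases_succ]
              exact hadj m'
      · -- left inverse
        intro p hp
        simp only [Finset.mem_filter, Finset.mem_univ, true_and] at hp
        obtain ⟨⟨hs, h0, hge, hadj⟩, h1⟩ := hp
        funext l
        induction l using Fin.cases with
        | zero => simp only [Fin.cases_zero, h0]
        | succ m' => simp only [Fin.cases_succ]
      · -- right inverse
        intro p' _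
        funext m
        simp only [Fin.cases_succ]
    · rw [if_neg hadje]
      rw [Finset.card_eq_zero, Finset.filter_eq_empty_iff]
      intro p hp
      simp only [Finset.mem_filter, Finset.mem_univ, true_and] at hp
      obtain ⟨hs, h0, hge, hadj⟩ := hp
      simp only [not_not]
      have h2 := hge 0
      rw [← one_eq_zero_succ k] at h2
      by_contra hcon
      push_neg at hcon
      have hp1 : p 1 = e := by ext; omega
      have := hadj 0
      rw [Fin.castSucc_zero, h0, ← one_eq_zero_succ k, hp1] at this
      exact hadje this


lemma key [DecidableRel G.Adj] (lam C : ℝ) (T : Fin n → ℝ)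
    (hT : ∀ i : Fin n, T i =
      (2 / (5 * lam)) *
        (∑ j ∈ Finset.univ.filter (fun j : Fin n => j < i ∧ G.Adj (x j) (x i)), T j)
      + 10 * C * (G.degree (x i)) / lam) :
    ∀ d η, η + d = n →
    (∑ i, T i) =
      (∑ i ∈ Finset.univ.filter (fun i : Fin n => (i : ℕ) < η),
        T i * ∑ k ∈ Finset.range n, (pathCountFrom G x k i η : ℝ) * (2 / (5 * lam)) ^ k)
      + ∑ i ∈ Finset.univ.filter (fun i : Fin n => η ≤ (i : ℕ)),
          (10 * C * (G.degree (x i)) / lam) *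
            ∑ k ∈ Finset.range n,
              (pathCountFrom G x k i ((i : ℕ) + 1) : ℝ) * (2 / (5 * lam)) ^ k := by
  intro d
  induction d with
  | zero =>
      intro η hη
      have hne : η = n := by omega
      subst hne
      have h1 : Finset.univ.filter (fun i : Fin η => (i : ℕ) < η) = Finset.univ :=
        Finset.filter_true_of_mem (fun i _ => i.isLt)
      have h2 : Finset.univ.filter (fun i : Fin η => η ≤ (i : ℕ)) = ∅ :=
        Finset.filter_false_of_mem (fun i _ => by have := i.isLt; omega)
      rw [h1, h2, Finset.sum_empty, add_zero]
      refine Finset.sum_congr rfl fun i _ => ?_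
      rw [Finset.sum_eq_single_of_mem 0 (Finset.mem_range.mpr i.pos)
        (fun k _ hk => by rw [pc_top G x k hk i]; simp)]
      simp [pc_zero]
  | succ d IH =>
      intro η hη
      have hn1 : 1 ≤ n := by omega
      have hηn : η < n := by omega
      set e : Fin n := ⟨η, hηn⟩ with he
      have heval : (e : ℕ) = η := rfl
      have IH' := IH (η + 1) (by omega)
      have hsplit1 : Finset.univ.filter (fun i : Fin n => (i : ℕ) < η + 1)
          = insert e (Finset.univ.filter (fun i : Fin n => (i : ℕ) < η)) := by
        ext i
        simp only [Finset.mem_filter, Finset.mem_univ, true_and, Finset.mem_insert,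
          Fin.ext_iff, heval]
        omega
      have hsplit2 : Finset.univ.filter (fun i : Fin n => η ≤ (i : ℕ))
          = insert e (Finset.univ.filter (fun i : Fin n => η + 1 ≤ (i : ℕ))) := by
        ext i
        simp only [Finset.mem_filter, Finset.mem_univ, true_and, Finset.mem_insert,
          Fin.ext_iff, heval]
        omega
      have hmem1 : e ∉ Finset.univ.filter (fun i : Fin n => (i : ℕ) < η) := by
        simp [heval]
      have hmem2 : e ∉ Finset.univ.filter (fun i : Fin n => η + 1 ≤ (i : ℕ)) := by
        simp [heval]
      rw [hsplit1, Finset.sum_insert hmem1] at IH'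
      rw [hsplit2, Finset.sum_insert hmem2, IH']
      simp only [heval]
      have hTe := hT e
      -- difference lemma
      have hdiff : ∀ i : Fin n, (i : ℕ) < η →
          (∑ k ∈ Finset.range n, (pathCountFrom G x k i η : ℝ) * (2 / (5 * lam)) ^ k)
            = (∑ k ∈ Finset.range n,
                (pathCountFrom G x k i (η + 1) : ℝ) * (2 / (5 * lam)) ^ k)
              + (if G.Adj (x i) (x e) then
                  (2 / (5 * lam)) * ∑ k ∈ Finset.range (n - 1),
                    (pathCountFrom G x k e (η + 1) : ℝ) * (2 / (5 * lam)) ^ k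
                 else 0) := by
        intro i hi
        have hie : i < e := by rw [Fin.lt_def, heval]; exact hi
        obtain ⟨m, rfl⟩ : ∃ m, n = m + 1 := ⟨n - 1, by omega⟩
        rw [show m + 1 - 1 = m from rfl]
        rw [Finset.sum_range_succ' (fun k => (pathCountFrom G x k i η : ℝ) * (2 / (5 * lam)) ^ k) m,
          Finset.sum_range_succ' (fun k => (pathCountFrom G x k i (η + 1) : ℝ) * (2 / (5 * lam)) ^ k) m]
        by_cases hadj : G.Adj (x i) (x e)
        · rw [if_pos hadj]
          have hsp : ∀ k, (pathCountFrom G x (k + 1) i η : ℝ) * (2 / (5 * lam)) ^ (k + 1)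
              = (pathCountFrom G x (k + 1) i (η + 1) : ℝ) * (2 / (5 * lam)) ^ (k + 1)
                + (2 / (5 * lam)) *
                  ((pathCountFrom G x k e (η + 1) : ℝ) * (2 / (5 * lam)) ^ k) := by
            intro k
            have h := pc_split G x k i e hie
            rw [heval, if_pos hadj] at h
            rw [h]
            push_cast
            ring
          rw [Finset.sum_congr rfl fun k _ => hsp k, Finset.sum_add_distrib, ← Finset.mul_sum]
          simp only [pc_zero, Nat.cast_one, pow_zero, mul_one]
          ring
        · rw [if_neg hadj]
          have hsp : ∀ k, (pathCountFrom G x (k + 1) i η : ℝ) * (2 / (5 * lam)) ^ (k + 1)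
              = (pathCountFrom G x (k + 1) i (η + 1) : ℝ) * (2 / (5 * lam)) ^ (k + 1) := by
            intro k
            have h := pc_split G x k i e hie
            rw [heval, if_neg hadj, add_zero] at h
            rw [h]
          rw [Finset.sum_congr rfl fun k _ => hsp k]
          simp only [pc_zero, Nat.cast_one, pow_zero, mul_one, add_zero]
      have h1 : (∑ i ∈ Finset.univ.filter (fun i : Fin n => (i : ℕ) < η),
            T i * ∑ k ∈ Finset.range n, (pathCountFrom G x k i η : ℝ) * (2 / (5 * lam)) ^ k)
          = (∑ i ∈ Finset.univ.filter (fun i : Fin n => (i : ℕ) < η),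
              T i * ∑ k ∈ Finset.range n,
                (pathCountFrom G x k i (η + 1) : ℝ) * (2 / (5 * lam)) ^ k)
            + ((2 / (5 * lam)) * ∑ k ∈ Finset.range (n - 1),
                (pathCountFrom G x k e (η + 1) : ℝ) * (2 / (5 * lam)) ^ k)
              * (∑ j ∈ Finset.univ.filter (fun j : Fin n => j < e ∧ G.Adj (x j) (x e)), T j) := by
        have hstep : ∀ i ∈ Finset.univ.filter (fun i : Fin n => (i : ℕ) < η),
            T i * ∑ k ∈ Finset.range n, (pathCountFrom G x k i η : ℝ) * (2 / (5 * lam)) ^ k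
            = T i * (∑ k ∈ Finset.range n,
                (pathCountFrom G x k i (η + 1) : ℝ) * (2 / (5 * lam)) ^ k)
              + (if G.Adj (x i) (x e) then
                  T i * ((2 / (5 * lam)) * ∑ k ∈ Finset.range (n - 1),
                    (pathCountFrom G x k e (η + 1) : ℝ) * (2 / (5 * lam)) ^ k) else 0) := by
          intro i hi
          simp only [Finset.mem_filter, Finset.mem_univ, true_and] at hi
          rw [hdiff i hi]
          by_cases hadj : G.Adj (x i) (x e) <;> simp [hadj, mul_add]
        rw [Finset.sum_congr rfl hstep, Finset.sum_add_distrib]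
        congr 1
        rw [← Finset.sum_filter, Finset.filter_filter]
        rw [show Finset.univ.filter (fun i : Fin n => (i : ℕ) < η ∧ G.Adj (x i) (x e))
            = Finset.univ.filter (fun j : Fin n => j < e ∧ G.Adj (x j) (x e)) from by
          ext i; simp [Fin.lt_def, heval]]
        rw [← Finset.sum_mul]
        ring
      have hSW : (∑ j ∈ Finset.univ.filter (fun j : Fin n => j < e ∧ G.Adj (x j) (x e)), T j)
            * (∑ k ∈ Finset.range (n - 1),
                (pathCountFrom G x k e (η + 1) : ℝ) * (2 / (5 * lam)) ^ k)
          = (∑ j ∈ Finset.univ.filter (fun j : Fin n => j < e ∧ G.Adj (x j) (x e)), T j)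
            * (∑ k ∈ Finset.range n,
                (pathCountFrom G x k e (η + 1) : ℝ) * (2 / (5 * lam)) ^ k) := by
        rcases Nat.eq_zero_or_pos η with h0 | hpos
        · have hS : Finset.univ.filter (fun j : Fin n => j < e ∧ G.Adj (x j) (x e)) = ∅ := by
            rw [Finset.filter_eq_empty_iff]
            rintro j - ⟨hj, -⟩
            rw [Fin.lt_def, heval, h0] at hj
            omega
          rw [hS, Finset.sum_empty]
          ring
        · have hW : (∑ k ∈ Finset.range n,
              (pathCountFrom G x k e (η + 1) : ℝ) * (2 / (5 * lam)) ^ k)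
              = (∑ k ∈ Finset.range (n - 1),
                  (pathCountFrom G x k e (η + 1) : ℝ) * (2 / (5 * lam)) ^ k)
                + (pathCountFrom G x (n - 1) e (η + 1) : ℝ) * (2 / (5 * lam)) ^ (n - 1) := by
            have h := Finset.sum_range_succ
              (fun k => (pathCountFrom G x k e (η + 1) : ℝ) * (2 / (5 * lam)) ^ k) (n - 1)
            rw [show n - 1 + 1 = n from by omega] at h
            exact h
          have hz : pathCountFrom G x (n - 1) e (η + 1) = 0 :=
            pc_big G x (n - 1) e (η + 1) (by rw [heval]; omega)
          rw [hW, hz]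
          push_cast
          ring
      linear_combination (∑ k ∈ Finset.range n,
          (pathCountFrom G x k e (η + 1) : ℝ) * (2 / (5 * lam)) ^ k) * hTe
        - h1 - (2 / (5 * lam)) * hSW


end

/-- With `T` defined recursively by
`T(x_i) = (2/(5λ)) · Σ_{j < i, x_j ~ x_i} T(x_j) + 10·C·deg(x_i)/λ`, for every
`η ∈ {0, 1, …, n-1}` (here the first sum is over the first `η` vertices and the second over
the remaining ones):
`Σ_{i=1}^n T(x_i) = Σ_{i=1}^η T(x_i)·(Σ_{k=1}^n z_{k,i,η+1}·(2/(5λ))^{k-1})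
  + Σ_{i=η+1}^n (10·C·deg(x_i)/λ)·(Σ_{k=1}^n z_{k,i}·(2/(5λ))^{k-1})`. -/
theorem stmt7 {V : Type*} [Fintype V] [DecidableEq V] (G : SimpleGraph V)
    [DecidableRel G.Adj] (n : ℕ) (x : Fin n ≃ V) (lam C : ℝ) (hlam : 0 < lam) (hC : 0 < C)
    (T : Fin n → ℝ)
    (hT : ∀ i : Fin n, T i =
      (2 / (5 * lam)) *
        (∑ j ∈ Finset.univ.filter (fun j : Fin n => j < i ∧ G.Adj (x j) (x i)), T j)
      + 10 * C * (G.degree (x i)) / lam)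
    (η : ℕ) (hη : η < n) :
    (∑ i, T i) =
      (∑ i ∈ Finset.univ.filter (fun i : Fin n => (i : ℕ) < η),
        T i * ∑ k ∈ Finset.range n, (pathCountFrom G x k i η : ℝ) * (2 / (5 * lam)) ^ k)
      + ∑ i ∈ Finset.univ.filter (fun i : Fin n => η ≤ (i : ℕ)),
          (10 * C * (G.degree (x i)) / lam) *
            ∑ k ∈ Finset.range n,
              (pathCountFrom G x k i ((i : ℕ) + 1) : ℝ) * (2 / (5 * lam)) ^ k :=
  key G x lam C T hT (n - η) η (by omega)
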